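/- Let G = ⊕_{n ∈ ℕ} ℤ/2ℤ be the countable abelian group of finitely supported (ℤ/2ℤ)-valued sequences, and let X = (G → ℤ/2ℤ) with the product topology, on which G acts by translations (g • x)(h) = x(h + g). Then the set of ergodic G-invariant Borel probability measures on X is dense (in the topology of weak convergence) in the set of all G-invariant Borel probability measures on X; consequently the simplex of G-invariant measures is a Poulsen simplex. -/

import Mathlib

open MeasureTheory
open scoped ENNReal

noncomputable def bernoulliShift (g : ℕ →₀ ZMod 2) (x : (ℕ →₀ ZMod 2) → ZMod 2) :
    (ℕ →₀ ZMod 2) → ZMod 2 :=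
  fun h => x (h + g)

namespace EDI

abbrev XX : Type := (ℕ →₀ ZMod 2) → ZMod 2

noncomputable def emb (n : ℕ) (v : Fin n → ZMod 2) : ℕ →₀ ZMod 2 :=
  Finsupp.onFinset (Finset.range n) (fun i => if h : i < n then v ⟨i, h⟩ else 0)
    (fun i hi => by
      by_contra hc
      simp only [Finset.mem_range] at hc
      exact hi (dif_neg (by omega)))

lemma emb_apply (n : ℕ) (v : Fin n → ZMod 2) (i : ℕ) :
    emb n v i = if h : i < n then v ⟨i, h⟩ else 0 := rfl

lemma emb_add (n : ℕ) (u v : Fin n → ZMod 2) : emb n (u + v) = emb n u + emb n v := by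
  ext i
  simp only [emb_apply, Finsupp.add_apply]
  split <;> simp

lemma emb_restrict (n : ℕ) (s : ℕ →₀ ZMod 2) (hs : ∀ i ∈ s.support, i < n) :
    emb n (fun i : Fin n => s i) = s := by
  ext i
  rw [emb_apply]
  split
  · rfl
  · rename_i h
    by_contra hc
    exact h (hs i (Finsupp.mem_support_iff.2 fun h0 => hc h0.symm))

noncomputable def pt (M : ℕ) (y : (Fin M → ZMod 2) → ZMod 2) : XX := fun h => y (fun i => h i)

noncomputable def window (n : ℕ) (x : XX) : (Fin n → ZMod 2) → ZMod 2 := fun v => x (emb n v)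

lemma lo_emb (n : ℕ) (v : Fin n → ZMod 2) : (fun i : Fin n => emb n v i) = v := by
  funext i
  simp [emb_apply, i.isLt]

lemma shift_pt (g : ℕ →₀ ZMod 2) (M : ℕ) (y : (Fin M → ZMod 2) → ZMod 2) :
    bernoulliShift g (pt M y) = pt M (fun v => y (v + fun i : Fin M => g i)) := by
  funext h
  show y (fun i => (h + g) i) = y ((fun i : Fin M => h i) + fun i : Fin M => g i)
  congr 1

lemma window_pt (n : ℕ) (y : (Fin n → ZMod 2) → ZMod 2) : window n (pt n y) = y := by
  funext v
  show y (fun i : Fin n => emb n v i) = y v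
  rw [lo_emb]

lemma shift_continuous (g : ℕ →₀ ZMod 2) : Continuous (bernoulliShift g) :=
  continuous_pi fun h => continuous_apply (h + g)

lemma shift_measurable (g : ℕ →₀ ZMod 2) : Measurable (bernoulliShift g) :=
  (shift_continuous g).measurable

lemma window_measurable (n : ℕ) : Measurable (window n) :=
  measurable_pi_lambda _ fun v => measurable_pi_apply _

def tra {n : ℕ} (a : Fin n → ZMod 2) (w : (Fin n → ZMod 2) → ZMod 2) :
    (Fin n → ZMod 2) → ZMod 2 := fun v => w (v + a)

lemma tra_tra {n : ℕ} (a : Fin n → ZMod 2) (w : (Fin n → ZMod 2) → ZMod 2) :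
    tra a (tra a w) = w := by
  funext v
  show w (v + a + a) = w v
  congr 1
  funext i
  simp [CharTwo.add_self_eq_zero, add_assoc]

lemma window_shift (n : ℕ) (a : Fin n → ZMod 2) (x : XX) :
    window n (bernoulliShift (emb n a) x) = tra a (window n x) := by
  funext v
  show x (emb n v + emb n a) = x (emb n (v + a))
  rw [emb_add]

lemma cardT (M : ℕ) : Fintype.card (Fin M → ZMod 2) = 2 ^ M := by
  rw [Fintype.card_fun, ZMod.card, Fintype.card_fin]

noncomputable def orb (M : ℕ) (y : (Fin M → ZMod 2) → ZMod 2) (t : Fin M → ZMod 2) : XX :=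
  pt M (fun v => y (v + t))

noncomputable def orbMeas (M : ℕ) (y : (Fin M → ZMod 2) → ZMod 2) : Measure XX :=
  (2 ^ M : ℝ≥0∞)⁻¹ • ∑ t : Fin M → ZMod 2, Measure.dirac (orb M y t)

lemma shift_orb (g : ℕ →₀ ZMod 2) (M : ℕ) (y : (Fin M → ZMod 2) → ZMod 2)
    (t : Fin M → ZMod 2) :
    bernoulliShift g (orb M y t) = orb M y (t + fun i : Fin M => g i) := by
  funext h
  show y ((fun i : Fin M => (h + g) i) + t) = y ((fun i : Fin M => h i) + (t + fun i : Fin M => g i))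
  congr 1
  funext i
  simp only [Pi.add_apply, Finsupp.add_apply]
  ring

lemma map_finset_sum {ι : Type*} (s : Finset ι) (μ : ι → Measure XX) {f : XX → XX}
    (hf : Measurable f) :
    Measure.map f (∑ i ∈ s, μ i) = ∑ i ∈ s, Measure.map f (μ i) := by
  induction s using Finset.cons_induction with
  | empty => simp
  | cons a s ha ih => rw [Finset.sum_cons, Finset.sum_cons, Measure.map_add _ _ hf, ih]

lemma orbMeas_inv (M : ℕ) (y : (Fin M → ZMod 2) → ZMod 2) (g : ℕ →₀ ZMod 2) :
    Measure.map (bernoulliShift g) (orbMeas M y) = orbMeas M y := by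
  rw [orbMeas, Measure.map_smul, map_finset_sum _ _ (shift_measurable g)]
  congr 1
  simp only [Measure.map_dirac' (shift_measurable g), shift_orb]
  exact Fintype.sum_equiv (Equiv.addRight (fun i : Fin M => g i)) _ _ (fun t => rfl)

instance orbMeas_prob (M : ℕ) (y : (Fin M → ZMod 2) → ZMod 2) :
    IsProbabilityMeasure (orbMeas M y) := by
  constructor
  rw [orbMeas, Measure.smul_apply, Measure.finset_sum_apply]
  simp only [measure_univ, Finset.sum_const, Finset.card_univ, cardT, nsmul_eq_mul, mul_one,
    smul_eq_mul]
  rw [Nat.cast_pow, Nat.cast_ofNat]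
  exact ENNReal.inv_mul_cancel (by positivity) (ENNReal.pow_ne_top ENNReal.ofNat_ne_top)

lemma integrable_dirac'' {f : XX → ℝ} (hf : StronglyMeasurable f) (x : XX) :
    Integrable f (Measure.dirac x) := by
  refine ⟨hf.aestronglyMeasurable, ?_⟩
  rw [HasFiniteIntegral, lintegral_dirac' x hf.measurable.enorm]
  exact enorm_lt_top

lemma integral_orbMeas (M : ℕ) (y : (Fin M → ZMod 2) → ZMod 2) {f : XX → ℝ}
    (hf : StronglyMeasurable f) :
    ∫ x, f x ∂(orbMeas M y) = (2 ^ M : ℝ)⁻¹ * ∑ t : Fin M → ZMod 2, f (orb M y t) := by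
  rw [orbMeas, integral_smul_measure,
    integral_finset_sum_measure (fun t _ => integrable_dirac'' hf _)]
  simp only [integral_dirac' _ _ hf, smul_eq_mul]
  congr 1
  rw [ENNReal.toReal_inv]
  norm_num

lemma orbMeas_erg (M : ℕ) (y : (Fin M → ZMod 2) → ZMod 2) (s : Set XX)
    (hs : MeasurableSet s) (hsinv : ∀ g, bernoulliShift g ⁻¹' s = s) :
    orbMeas M y s = 0 ∨ orbMeas M y s = 1 := by
  have key : ∀ t, (orb M y t ∈ s ↔ orb M y 0 ∈ s) := by
    intro t
    have h1 : orb M y t = bernoulliShift (emb M t) (orb M y 0) := by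
      rw [shift_orb]
      congr 1
      rw [zero_add, lo_emb]
    rw [h1, ← Set.mem_preimage, hsinv]
  have happ : orbMeas M y s
      = (2 ^ M : ℝ≥0∞)⁻¹ * ∑ t : Fin M → ZMod 2, Measure.dirac (orb M y t) s := by
    rw [orbMeas, Measure.smul_apply, Measure.finset_sum_apply, smul_eq_mul]
  by_cases h0 : orb M y 0 ∈ s
  · right
    rw [happ, Finset.sum_congr rfl (fun t _ => by
      rw [Measure.dirac_apply' _ hs, Set.indicator_of_mem ((key t).2 h0)])]
    simp only [Pi.one_apply, Finset.sum_const, Finset.card_univ, cardT, nsmul_eq_mul, mul_one]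
    rw [Nat.cast_pow, Nat.cast_ofNat]
    exact ENNReal.inv_mul_cancel (by positivity) (ENNReal.pow_ne_top ENNReal.ofNat_ne_top)
  · left
    rw [happ, Finset.sum_congr rfl (fun t _ => by
      rw [Measure.dirac_apply' _ hs, Set.indicator_of_notMem (fun hc => h0 ((key t).1 hc))])]
    simp

lemma integral_window (n : ℕ) (ρ : Measure XX) [IsProbabilityMeasure ρ]
    (u : ((Fin n → ZMod 2) → ZMod 2) → ℝ) :
    ∫ x, u (window n x) ∂ρ
      = ∑ w : (Fin n → ZMod 2) → ZMod 2, (ρ (window n ⁻¹' {w})).toReal * u w := by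
  have hm := window_measurable n
  have hu : Measurable u := measurable_of_countable u
  rw [← integral_map hm.aemeasurable hu.stronglyMeasurable.aestronglyMeasurable]
  haveI : IsProbabilityMeasure (Measure.map (window n) ρ) :=
    Measure.isProbabilityMeasure_map hm.aemeasurable
  rw [integral_fintype _]
  refine Finset.sum_congr rfl fun w _ => ?_
  rw [measureReal_def, Measure.map_apply hm (measurableSet_singleton w), smul_eq_mul]
  exact Integrable.of_finite

lemma p_inv (n : ℕ) (μ : Measure XX)
    (hinv : ∀ g, Measure.map (bernoulliShift g) μ = μ)
    (a : Fin n → ZMod 2) (w : (Fin n → ZMod 2) → ZMod 2) :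
    μ (window n ⁻¹' {tra a w}) = μ (window n ⁻¹' {w}) := by
  have hset : window n ⁻¹' {tra a w} = bernoulliShift (emb n a) ⁻¹' (window n ⁻¹' {w}) := by
    ext x
    simp only [Set.mem_preimage, Set.mem_singleton_iff, window_shift]
    constructor
    · intro h; rw [h, tra_tra]
    · intro h; rw [← h, tra_tra]
  rw [hset, ← Measure.map_apply (shift_measurable _)
    (window_measurable n (measurableSet_singleton w)), hinv]

lemma sum_p (n : ℕ) (μ : Measure XX) [IsProbabilityMeasure μ] :
    ∑ w : (Fin n → ZMod 2) → ZMod 2, (μ (window n ⁻¹' {w})).toReal = 1 := by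
  rw [← ENNReal.toReal_sum (fun w _ => measure_ne_top μ _)]
  have := sum_measure_preimage_singleton (μ := μ) (Finset.univ : Finset ((Fin n → ZMod 2) → ZMod 2))
    (f := window n) (fun w _ => window_measurable n (measurableSet_singleton w))
  rw [this]
  simp [measure_univ]

lemma rounding {K : Type*} [Fintype K] [DecidableEq K] [Nonempty K] (p : K → ℝ)
    (hp : ∀ i, 0 ≤ p i) (hs : ∑ i, p i = 1) {δ : ℝ} (hδ : 0 < δ) :
    ∃ (m : ℕ) (N : K → ℕ), (∑ i, N i) = 2 ^ m ∧
      ∑ i, |(N i : ℝ) / 2 ^ m - p i| ≤ δ := by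
  obtain ⟨m, hm⟩ := pow_unbounded_of_one_lt (R := ℝ)
    ((2 * Fintype.card K + 1) / δ) one_lt_two
  have hT : (0:ℝ) < 2 ^ m := by positivity
  set F : K → ℕ := fun i => ⌊p i * 2 ^ m⌋₊ with hF
  have hFle : ∀ i, (F i : ℝ) ≤ p i * 2 ^ m := fun i => Nat.floor_le (mul_nonneg (hp i) (by positivity))
  have hFgt : ∀ i, p i * 2 ^ m - 1 < F i := fun i => Nat.sub_one_lt_floor _
  have hsumle : ∑ i, F i ≤ 2 ^ m := by
    have h1 : (∑ i, (F i : ℝ)) ≤ 2 ^ m := by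
      calc (∑ i, (F i : ℝ)) ≤ ∑ i, p i * 2 ^ m := Finset.sum_le_sum fun i _ => hFle i
        _ = 2 ^ m := by rw [← Finset.sum_mul, hs, one_mul]
    have h2 : ((∑ i, F i : ℕ) : ℝ) ≤ ((2 ^ m : ℕ) : ℝ) := by push_cast; exact h1
    exact_mod_cast h2
  obtain ⟨i0⟩ := (inferInstance : Nonempty K)
  set D : ℕ := 2 ^ m - ∑ i, F i with hD
  have hDcast : (D : ℝ) = 2 ^ m - ∑ i, (F i : ℝ) := by
    rw [hD, Nat.cast_sub hsumle]
    push_cast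
    ring
  have hDle : (D : ℝ) ≤ Fintype.card K := by
    have h2 : (2:ℝ) ^ m - Fintype.card K ≤ ∑ i, (F i : ℝ) := by
      have : ∑ i, (p i * 2 ^ m - 1) ≤ ∑ i, (F i : ℝ) :=
        Finset.sum_le_sum fun i _ => (hFgt i).le
      rw [Finset.sum_sub_distrib, ← Finset.sum_mul, hs, one_mul] at this
      simpa using this
    rw [hDcast]
    linarith
  refine ⟨m, fun i => F i + if i = i0 then D else 0, ?_, ?_⟩
  · rw [Finset.sum_add_distrib, Finset.sum_ite_eq' Finset.univ i0 (fun _ => D)]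
    simp only [Finset.mem_univ, if_true]
    omega
  · have hterm : ∀ i, |((F i + if i = i0 then D else 0 : ℕ) : ℝ) / 2 ^ m - p i|
        ≤ 1 / 2 ^ m + (if i = i0 then (D:ℝ)/2^m else 0) := by
      intro i
      have hbase : |(F i : ℝ) / 2 ^ m - p i| ≤ 1 / 2 ^ m := by
        have he : (F i : ℝ) / 2 ^ m - p i = ((F i : ℝ) - p i * 2 ^ m) / 2 ^ m := by
          field_simp
        rw [he, abs_div, abs_of_pos hT, div_le_div_iff₀ hT hT]
        have h1 : |(F i : ℝ) - p i * 2 ^ m| ≤ 1 :=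
          abs_le.2 ⟨by linarith [hFgt i], by linarith [hFle i]⟩
        nlinarith
      calc |((F i + if i = i0 then D else 0 : ℕ) : ℝ) / 2 ^ m - p i|
          = |((F i : ℝ) / 2 ^ m - p i) + (if i = i0 then (D:ℝ) else 0) / 2 ^ m| := by
            push_cast
            split <;> ring_nf
        _ ≤ |(F i : ℝ) / 2 ^ m - p i| + |(if i = i0 then (D:ℝ) else 0) / 2 ^ m| := abs_add_le _ _
        _ ≤ 1 / 2 ^ m + (if i = i0 then (D:ℝ)/2^m else 0) := by
            refine add_le_add hbase ?_
            split
            · rw [abs_div, abs_of_pos hT, abs_of_nonneg (by positivity)]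
            · simp
    calc ∑ i, |((F i + if i = i0 then D else 0 : ℕ) : ℝ) / 2 ^ m - p i|
        ≤ ∑ i, (1 / 2 ^ m + (if i = i0 then (D:ℝ)/2^m else 0)) :=
          Finset.sum_le_sum fun i _ => hterm i
      _ = Fintype.card K * (1 / 2 ^ m) + (D:ℝ)/2^m := by
          rw [Finset.sum_add_distrib, Finset.sum_const, Finset.card_univ,
            Finset.sum_ite_eq' Finset.univ i0 (fun _ => (D:ℝ)/2^m)]
          simp [nsmul_eq_mul]
      _ ≤ (2 * Fintype.card K + 1) / 2 ^ m := by
          rw [mul_one_div, ← add_div, div_le_div_iff₀ hT hT]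
          nlinarith [hDle, (show (0:ℝ) ≤ Fintype.card K by positivity)]
      _ ≤ δ := by
          rw [div_le_iff₀ hT]
          rw [div_lt_iff₀ hδ] at hm
          nlinarith

lemma exists_Q {K : Type*} [Fintype K] [DecidableEq K] (m : ℕ) (N : K → ℕ)
    (hN : ∑ i, N i = 2 ^ m) :
    ∃ Q : (Fin m → ZMod 2) → K,
      ∀ A : K → ℝ, ∑ c : Fin m → ZMod 2, A (Q c) = ∑ i, (N i : ℝ) * A i := by
  classical
  set e := (Fintype.equivFin K).symm with he
  set L : List K :=
    (List.ofFn fun j : Fin (Fintype.card K) => List.replicate (N (e j)) (e j)).flatten with hL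
  have hlen : L.length = 2 ^ m := by
    rw [hL, List.length_flatten, List.map_ofFn]
    rw [List.sum_ofFn]
    simp only [Function.comp, List.length_replicate]
    rw [Equiv.sum_comp e N, hN]
  have hcard : Fintype.card (Fin m → ZMod 2) = L.length := by rw [hlen, cardT]
  set E := Fintype.equivFinOfCardEq hcard with hE
  refine ⟨fun c => L.get (E c), fun A => ?_⟩
  have h1 : ∑ c : Fin m → ZMod 2, A (L.get (E c)) = ∑ j : Fin L.length, A (L.get j) :=
    Equiv.sum_comp E (fun j => A (L.get j))
  have h2 : (L.map A).sum = ∑ j : Fin L.length, A (L.get j) := by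
    conv_lhs => rw [← List.ofFn_get L, List.map_ofFn]
    rw [List.sum_ofFn]
    rfl
  have h3 : (L.map A).sum = ∑ i, (N i : ℝ) * A i := by
    rw [hL, List.map_flatten, List.map_ofFn, List.sum_flatten, List.map_ofFn, List.sum_ofFn]
    have : ∀ j, ((List.replicate (N (e j)) (e j)).map A).sum = (N (e j) : ℝ) * A (e j) := by
      intro j
      rw [List.map_replicate, List.sum_replicate, nsmul_eq_mul]
    simp only [Function.comp]
    rw [Finset.sum_congr rfl fun j _ => this j]
    exact Equiv.sum_comp e (fun i => (N i : ℝ) * A i)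
  rw [h1, ← h2, h3]

def glue {n m : ℕ} (a : Fin n → ZMod 2) (c : Fin m → ZMod 2) : Fin (n + m) → ZMod 2 :=
  fun i => if h : (i : ℕ) < n then a ⟨i, h⟩ else c ⟨(i : ℕ) - n, by omega⟩

def gl (n m : ℕ) : ((Fin n → ZMod 2) × (Fin m → ZMod 2)) ≃ (Fin (n + m) → ZMod 2) where
  toFun p := glue p.1 p.2
  invFun t := (fun i => t ⟨(i : ℕ), by omega⟩, fun j => t ⟨n + (j : ℕ), by omega⟩)
  left_inv p := by
    refine Prod.ext ?_ ?_
    · funext i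
      simp only [glue]
      rw [dif_pos i.isLt]
    · funext j
      simp only [glue]
      rw [dif_neg (by omega)]
      congr 1
      exact Fin.ext (by simp)
  right_inv t := by
    funext i
    simp only [glue]
    split
    · rfl
    · congr 1
      exact Fin.ext (by simp only [Fin.val_mk]; omega)

lemma glue_add {n m : ℕ} (v a : Fin n → ZMod 2) (c : Fin m → ZMod 2) :
    (fun i : Fin (n + m) => emb n v i) + glue a c = glue (v + a) c := by
  funext i
  by_cases h : (i : ℕ) < n
  · simp only [Pi.add_apply, emb_apply, glue, dif_pos h]
  · simp only [Pi.add_apply, emb_apply, glue, dif_neg h]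
    rw [zero_add]

lemma approx (μ : Measure XX) [IsProbabilityMeasure μ]
    (hinv : ∀ g, Measure.map (bernoulliShift g) μ = μ) (n : ℕ) {δ : ℝ} (hδ : 0 < δ) :
    ∃ (M : ℕ) (y : (Fin M → ZMod 2) → ZMod 2),
      ∀ (u : ((Fin n → ZMod 2) → ZMod 2) → ℝ) (B : ℝ), (∀ w, |u w| ≤ B) →
        |∫ x, u (window n x) ∂(orbMeas M y) - ∫ x, u (window n x) ∂μ| ≤ B * δ := by
  classical
  set p : ((Fin n → ZMod 2) → ZMod 2) → ℝ := fun w => (μ (window n ⁻¹' {w})).toReal with hp'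
  obtain ⟨m, N, hNsum, hNerr⟩ := rounding p (fun w => ENNReal.toReal_nonneg) (sum_p n μ) hδ
  obtain ⟨Q, hQ⟩ := exists_Q m N hNsum
  set y : (Fin (n + m) → ZMod 2) → ZMod 2 :=
    fun t => Q ((gl n m).symm t).2 ((gl n m).symm t).1 with hy
  refine ⟨n + m, y, fun u B hB => ?_⟩
  have hB0 : 0 ≤ B := le_trans (abs_nonneg _) (hB (fun _ => 0))
  have fact1 : ∀ (a : Fin n → ZMod 2) (c : Fin m → ZMod 2),
      window n (orb (n + m) y (glue a c)) = tra a (Q c) := by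
    intro a c
    funext v
    show y ((fun i : Fin (n + m) => emb n v i) + glue a c) = Q c (v + a)
    rw [glue_add]
    show y (gl n m (v + a, c)) = Q c (v + a)
    rw [hy]
    simp only [Equiv.symm_apply_apply]
  have fact2 : ∀ φ : (Fin (n + m) → ZMod 2) → ℝ,
      ∑ t, φ t = ∑ a : Fin n → ZMod 2, ∑ c : Fin m → ZMod 2, φ (glue a c) := by
    intro φ
    rw [← Equiv.sum_comp (gl n m) φ, Fintype.sum_prod_type]
    exact Finset.sum_congr rfl fun a _ => Finset.sum_congr rfl fun c _ => rfl
  have hu : Measurable u := measurable_of_countable u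
  have hνint : ∫ x, u (window n x) ∂(orbMeas (n + m) y)
      = (2 ^ (n + m) : ℝ)⁻¹ * ∑ t, u (window n (orb (n + m) y t)) :=
    integral_orbMeas _ _ ((hu.comp (window_measurable n)).stronglyMeasurable)
  have hν2 : ∫ x, u (window n x) ∂(orbMeas (n + m) y)
      = (2 ^ (n + m) : ℝ)⁻¹ *
         ∑ a : Fin n → ZMod 2, ∑ w, (N w : ℝ) * u (tra a w) := by
    rw [hνint, fact2 (fun t => u (window n (orb (n + m) y t)))]
    congr 1
    refine Finset.sum_congr rfl fun a _ => ?_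
    rw [Finset.sum_congr rfl fun c (_ : c ∈ Finset.univ) => by rw [fact1]]
    exact hQ (fun w => u (tra a w))
  have hsym : ∀ a : Fin n → ZMod 2, ∑ w, p w * u w = ∑ w, p w * u (tra a w) := by
    intro a
    have hbij : Function.Bijective (tra a) := Function.Involutive.bijective (tra_tra a)
    have h0 := Fintype.sum_bijective (tra a) hbij
      (fun w => p (tra a w) * u (tra a w)) (fun w => p w * u w) (fun w => rfl)
    rw [← h0]
    refine Finset.sum_congr rfl fun w _ => ?_
    have hpp : p (tra a w) = p w := by
      show (μ (window n ⁻¹' {tra a w})).toReal = (μ (window n ⁻¹' {w})).toReal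
      rw [p_inv n μ hinv a w]
    show p (tra a w) * u (tra a w) = p w * u (tra a w)
    rw [hpp]
  have hμ2 : ∫ x, u (window n x) ∂μ
      = (2 ^ n : ℝ)⁻¹ * ∑ a : Fin n → ZMod 2, ∑ w, p w * u (tra a w) := by
    rw [integral_window n μ u]
    conv_rhs => rw [Finset.sum_congr rfl (fun a (_ : a ∈ Finset.univ) => (hsym a).symm),
      Finset.sum_const, Finset.card_univ, cardT]
    rw [nsmul_eq_mul, ← mul_assoc, Nat.cast_pow, Nat.cast_ofNat,
      inv_mul_cancel₀ (by positivity), one_mul]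
  rw [hν2, hμ2]
  have hpow : ((2:ℝ) ^ n)⁻¹ = (2 ^ (n + m) : ℝ)⁻¹ * 2 ^ m := by
    rw [pow_add]
    field_simp
  have hdiff : (2 ^ (n + m) : ℝ)⁻¹ * (∑ a : Fin n → ZMod 2, ∑ w, (N w : ℝ) * u (tra a w))
      - (2 ^ n : ℝ)⁻¹ * (∑ a : Fin n → ZMod 2, ∑ w, p w * u (tra a w))
      = (2 ^ (n + m) : ℝ)⁻¹ *
        ∑ a : Fin n → ZMod 2, ∑ w, ((N w : ℝ) - 2 ^ m * p w) * u (tra a w) := by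
    rw [hpow, mul_assoc, ← mul_sub]
    congr 1
    rw [Finset.mul_sum, ← Finset.sum_sub_distrib]
    refine Finset.sum_congr rfl fun a _ => ?_
    rw [Finset.mul_sum, ← Finset.sum_sub_distrib]
    refine Finset.sum_congr rfl fun w _ => ?_
    ring
  rw [hdiff, abs_mul, abs_of_nonneg (show (0:ℝ) ≤ (2 ^ (n + m) : ℝ)⁻¹ by positivity)]
  have h1 : |∑ a : Fin n → ZMod 2, ∑ w, ((N w : ℝ) - 2 ^ m * p w) * u (tra a w)|
      ≤ ∑ a : Fin n → ZMod 2, ∑ w, |(N w : ℝ) - 2 ^ m * p w| * B := by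
    refine (Finset.abs_sum_le_sum_abs _ _).trans (Finset.sum_le_sum fun a _ => ?_)
    refine (Finset.abs_sum_le_sum_abs _ _).trans (Finset.sum_le_sum fun w _ => ?_)
    rw [abs_mul]
    exact mul_le_mul_of_nonneg_left (hB _) (abs_nonneg _)
  have h3 : ∑ w, |(N w : ℝ) - 2 ^ m * p w| * B ≤ (2 ^ m * δ) * B := by
    rw [← Finset.sum_mul]
    refine mul_le_mul_of_nonneg_right ?_ hB0
    have he : ∀ w, |(N w : ℝ) - 2 ^ m * p w| = 2 ^ m * |(N w : ℝ) / 2 ^ m - p w| := by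
      intro w
      rw [← abs_of_pos (show (0:ℝ) < 2 ^ m by positivity), ← abs_mul]
      · congr 1
        field_simp
        rw [abs_of_pos (show (0:ℝ) < 2 ^ m by positivity)]
    rw [Finset.sum_congr rfl fun w _ => he w, ← Finset.mul_sum]
    exact mul_le_mul_of_nonneg_left hNerr (by positivity)
  have h2 : ∑ a : Fin n → ZMod 2, ∑ w, |(N w : ℝ) - 2 ^ m * p w| * B
      = 2 ^ n * ∑ w, |(N w : ℝ) - 2 ^ m * p w| * B := by
    rw [Finset.sum_const, Finset.card_univ, cardT, nsmul_eq_mul]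
    push_cast
    ring
  calc (2 ^ (n + m) : ℝ)⁻¹ * |∑ a : Fin n → ZMod 2, ∑ w, ((N w : ℝ) - 2 ^ m * p w) * u (tra a w)|
      ≤ (2 ^ (n + m) : ℝ)⁻¹ * (2 ^ n * ((2 ^ m * δ) * B)) := by
        refine mul_le_mul_of_nonneg_left ?_ (by positivity)
        refine h1.trans ?_
        rw [h2]
        exact mul_le_mul_of_nonneg_left h3 (by positivity)
    _ = B * δ := by
        rw [pow_add]
        field_simp

lemma cyl (f : BoundedContinuousFunction XX ℝ) {ε : ℝ} (hε : 0 < ε) :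
    ∃ n : ℕ, ∀ x : XX, |f x - f (pt n (window n x))| ≤ ε := by
  classical
  have hx : ∀ x : XX, ∃ S : Finset (ℕ →₀ ZMod 2),
      ∀ y : XX, (∀ s ∈ S, y s = x s) → |f y - f x| ≤ ε / 2 := by
    intro x
    have hc : {y : XX | |f y - f x| < ε / 2} ∈ nhds x := by
      have h1 : Metric.ball (f x) (ε / 2) ∈ nhds (f x) :=
        Metric.ball_mem_nhds _ (by linarith)
      have h2 := (f.continuous.tendsto x) h1
      refine Filter.mem_of_superset h2 ?_
      intro y hy
      simp only [Set.mem_preimage, Metric.mem_ball, Real.dist_eq] at hy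
      exact hy
    rw [nhds_pi, Filter.mem_pi] at hc
    obtain ⟨I, hIfin, t, ht, hsub⟩ := hc
    refine ⟨hIfin.toFinset, fun y hy => le_of_lt (hsub ?_)⟩
    intro s hs
    have hys : y s = x s := hy s ((hIfin.mem_toFinset).2 hs)
    rw [hys]
    have := ht s
    rw [nhds_discrete, Filter.mem_pure] at this
    exact this
  choose S hS using hx
  have hnbhd : ∀ x : XX, {y : XX | ∀ s ∈ S x, y s = x s} ∈ nhds x := by
    intro x
    have hopen : IsOpen {y : XX | ∀ s ∈ S x, y s = x s} := by
      have : {y : XX | ∀ s ∈ S x, y s = x s} = ⋂ s ∈ S x, (fun y : XX => y s) ⁻¹' {x s} := by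
        ext y
        simp [Set.mem_iInter]
      rw [this]
      exact isOpen_biInter_finset fun s _ =>
        (continuous_apply s).isOpen_preimage _ (isOpen_discrete _)
    exact hopen.mem_nhds (fun s _ => rfl)
  obtain ⟨F, -, hcov⟩ := isCompact_univ.elim_nhds_subcover
    (fun x => {y : XX | ∀ s ∈ S x, y s = x s}) (fun x _ => hnbhd x)
  set n : ℕ := 1 + F.sup (fun x0 => (S x0).sup (fun s => s.support.sup id)) with hn
  refine ⟨n, fun x => ?_⟩
  have hxmem := hcov (Set.mem_univ x)
  rw [Set.mem_iUnion₂] at hxmem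
  obtain ⟨x0, hx0F, hxU⟩ := hxmem
  have hagree : ∀ s ∈ S x0, pt n (window n x) s = x0 s := by
    intro s hs
    have hslt : ∀ i ∈ s.support, i < n := by
      intro i hi
      have h1 : i ≤ s.support.sup id := Finset.le_sup (f := id) hi
      have h2 : s.support.sup id ≤ (S x0).sup (fun s => s.support.sup id) :=
        Finset.le_sup (f := fun s => s.support.sup id) hs
      have h3 : (S x0).sup (fun s => s.support.sup id)
          ≤ F.sup (fun x0 => (S x0).sup (fun s => s.support.sup id)) :=
        Finset.le_sup (f := fun x0 => (S x0).sup (fun s => s.support.sup id)) hx0F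
      omega
    have hps : pt n (window n x) s = x s := by
      show window n x (fun i : Fin n => s i) = x s
      show x (emb n (fun i : Fin n => s i)) = x s
      rw [emb_restrict n s hslt]
    rw [hps]
    exact hxU s hs
  have h1 : |f x - f x0| ≤ ε / 2 := hS x0 x hxU
  have h2 : |f (pt n (window n x)) - f x0| ≤ ε / 2 := hS x0 _ hagree
  calc |f x - f (pt n (window n x))|
      = |(f x - f x0) - (f (pt n (window n x)) - f x0)| := by ring_nf
    _ ≤ |f x - f x0| + |f (pt n (window n x)) - f x0| := abs_sub _ _
    _ ≤ ε := by linarith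

lemma int_close {n : ℕ} (ρ : Measure XX) [IsProbabilityMeasure ρ]
    (f : BoundedContinuousFunction XX ℝ) (u : ((Fin n → ZMod 2) → ZMod 2) → ℝ) {ε : ℝ}
    (h : ∀ x, |f x - u (window n x)| ≤ ε) :
    |∫ x, f x ∂ρ - ∫ x, u (window n x) ∂ρ| ≤ ε := by
  have hint1 : Integrable f ρ := f.integrable ρ
  have hu : Measurable fun x => u (window n x) :=
    (measurable_of_countable u).comp (window_measurable n)
  have hint2 : Integrable (fun x => u (window n x)) ρ := by
    haveI : IsProbabilityMeasure (Measure.map (window n) ρ) :=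
      Measure.isProbabilityMeasure_map (window_measurable n).aemeasurable
    have h0 : Integrable u (Measure.map (window n) ρ) := Integrable.of_finite
    exact (integrable_map_measure
      (measurable_of_countable u).stronglyMeasurable.aestronglyMeasurable
      (window_measurable n).aemeasurable).1 h0
  rw [← integral_sub hint1 hint2]
  have hb := norm_integral_le_integral_norm (μ := ρ) (fun x => f x - u (window n x))
  rw [Real.norm_eq_abs] at hb
  refine hb.trans ?_
  have : ∫ x, ‖f x - u (window n x)‖ ∂ρ ≤ ∫ _x, ε ∂ρ := by
    refine integral_mono (hint1.sub hint2).norm (integrable_const ε) ?_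
    intro x
    show ‖f x - u (window n x)‖ ≤ ε
    rw [Real.norm_eq_abs]
    exact h x
  refine this.trans ?_
  rw [integral_const, probReal_univ]
  simp

lemma emb_ext {n j : ℕ} (hnj : n ≤ j) (v : Fin n → ZMod 2) :
    emb j (fun i : Fin j => if h : (i : ℕ) < n then v ⟨i, h⟩ else 0) = emb n v := by
  ext i
  rw [emb_apply, emb_apply]
  by_cases h1 : i < n
  · rw [dif_pos (show i < j by omega), dif_pos h1]
  · rw [dif_neg h1]
    by_cases h2 : i < j
    · rw [dif_pos h2, dif_neg (show ¬ ((⟨i, h2⟩ : Fin j) : ℕ) < n from h1)]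
    · rw [dif_neg h2]

end EDI

open EDI in
/-- For the translation action of `G = ⊕_{n ∈ ℕ} ℤ/2ℤ` on `X = (G → ℤ/2ℤ)` (with the
product topology), the ergodic `G`-invariant Borel probability measures are dense, in
the topology of weak convergence, in the set of all `G`-invariant Borel probability
measures; hence the simplex of invariant measures is a Poulsen simplex. -/
theorem ergodic_dense_in_invariant
    (Inv Erg : Set (ProbabilityMeasure ((ℕ →₀ ZMod 2) → ZMod 2)))
    (hInv : Inv = {μ : ProbabilityMeasure ((ℕ →₀ ZMod 2) → ZMod 2) | ∀ g : ℕ →₀ ZMod 2,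
      Measure.map (bernoulliShift g) (μ : Measure ((ℕ →₀ ZMod 2) → ZMod 2)) =
        (μ : Measure ((ℕ →₀ ZMod 2) → ZMod 2))})
    (hErg : Erg = {μ | μ ∈ Inv ∧ ∀ s : Set ((ℕ →₀ ZMod 2) → ZMod 2), MeasurableSet s →
      (∀ g : ℕ →₀ ZMod 2, bernoulliShift g ⁻¹' s = s) →
      (μ : Measure ((ℕ →₀ ZMod 2) → ZMod 2)) s = 0 ∨
        (μ : Measure ((ℕ →₀ ZMod 2) → ZMod 2)) s = 1}) :
    Inv ⊆ closure Erg := by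
  intro μ hμ
  rw [hInv] at hμ
  simp only [Set.mem_setOf_eq] at hμ
  have hseq : ∀ j : ℕ, ∃ ν : ProbabilityMeasure XX, ν ∈ Erg ∧
      ∀ (u : ((Fin j → ZMod 2) → ZMod 2) → ℝ) (B : ℝ), (∀ w, |u w| ≤ B) →
        |∫ x, u (window j x) ∂(ν : Measure XX) - ∫ x, u (window j x) ∂(μ : Measure XX)|
          ≤ B * (1 / (j + 1)) := by
    intro j
    obtain ⟨M, y, hbound⟩ := approx (μ : Measure XX) hμ j (δ := 1 / (j + 1)) (by positivity)
    refine ⟨⟨orbMeas M y, orbMeas_prob M y⟩, ?_, hbound⟩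
    rw [hErg]
    refine ⟨?_, ?_⟩
    · rw [hInv]
      exact fun g => orbMeas_inv M y g
    · exact fun s hs hsinv => orbMeas_erg M y s hs hsinv
  choose νs hmem hb using hseq
  refine mem_closure_of_tendsto (b := Filter.atTop) ?_ (Filter.Eventually.of_forall hmem)
  rw [ProbabilityMeasure.tendsto_iff_forall_integral_tendsto]
  intro f
  rw [Metric.tendsto_atTop]
  intro ε hε
  obtain ⟨n, hn⟩ := cyl f (show (0:ℝ) < ε / 4 by linarith)
  obtain ⟨N1, hN1⟩ := exists_nat_gt ((‖f‖ + 1) * 4 / ε)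
  refine ⟨max n N1, fun j hj => ?_⟩
  have hjn : n ≤ j := le_trans (le_max_left _ _) hj
  have hjN : (N1 : ℝ) ≤ (j : ℝ) := by exact_mod_cast le_trans (le_max_right _ _) hj
  set u : ((Fin j → ZMod 2) → ZMod 2) → ℝ :=
    fun pp => f (pt n (fun v : Fin n → ZMod 2 =>
      pp (fun i : Fin j => if h : (i : ℕ) < n then v ⟨i, h⟩ else 0))) with hu
  have hkey : ∀ x : XX, u (window j x) = f (pt n (window n x)) := by
    intro x
    have hres : (fun v : Fin n → ZMod 2 =>
        window j x (fun i : Fin j => if h : (i : ℕ) < n then v ⟨i, h⟩ else 0))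
        = window n x := by
      funext v
      show x (emb j (fun i : Fin j => if h : (i : ℕ) < n then v ⟨i, h⟩ else 0)) = x (emb n v)
      rw [emb_ext hjn v]
    show f (pt n (fun v : Fin n → ZMod 2 =>
      window j x (fun i : Fin j => if h : (i : ℕ) < n then v ⟨i, h⟩ else 0)))
        = f (pt n (window n x))
    rw [hres]
  have hptw : ∀ x : XX, |f x - u (window j x)| ≤ ε / 4 := by
    intro x
    rw [hkey x]
    exact hn x
  have hBu : ∀ w, |u w| ≤ ‖f‖ := by
    intro w
    rw [← Real.norm_eq_abs]
    exact f.norm_coe_le_norm _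
  have T1 := int_close (νs j : Measure XX) f u hptw
  have T3 := int_close (μ : Measure XX) f u hptw
  have T2 := hb j u ‖f‖ hBu
  rw [Real.dist_eq]
  have hnorm0 : (0:ℝ) ≤ ‖f‖ := norm_nonneg f
  have hstep : ‖f‖ * (1 / ((j : ℝ) + 1)) < ε / 4 := by
    rw [div_lt_iff₀ hε] at hN1
    rw [mul_one_div, div_lt_div_iff₀ (by positivity) (by norm_num : (0:ℝ) < 4)]
    nlinarith
  have habs1 := abs_sub_le (∫ x, f x ∂(νs j : Measure XX))
    (∫ x, u (window j x) ∂(νs j : Measure XX)) (∫ x, f x ∂(μ : Measure XX))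
  have habs2 := abs_sub_le (∫ x, u (window j x) ∂(νs j : Measure XX))
    (∫ x, u (window j x) ∂(μ : Measure XX)) (∫ x, f x ∂(μ : Measure XX))
  have habs3 : |∫ x, u (window j x) ∂(μ : Measure XX) - ∫ x, f x ∂(μ : Measure XX)|
      = |∫ x, f x ∂(μ : Measure XX) - ∫ x, u (window j x) ∂(μ : Measure XX)| :=
    abs_sub_comm _ _
  linarith
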